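/- The double integral ∫₁^∞ ∫₀¹ 1/(x(x+y)) dy dx equals (1/2)·ζ(2) = π²/12. -/

import Mathlib

open MeasureTheory Real Set

lemma eta_two : HasSum (fun n : ℕ => (-1 : ℝ)^n / ((n:ℝ)+1)^2) (Real.pi^2/12) := by
  have hζ : HasSum (fun n : ℕ => (1:ℝ)/((n:ℝ)+1)^2) (Real.pi^2/6) := by
    have := (hasSum_nat_add_iff' (f := fun n : ℕ => (1:ℝ)/(n:ℝ)^2) 1).mpr hasSum_zeta_two
    simpa using this
  set h : ℕ → ℝ := fun n => if Odd n then 2/((n:ℝ)+1)^2 else 0 with hdef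
  have hinj : Function.Injective (fun k : ℕ => 2*k+1) := by
    intro a b hab; simp only [] at hab; omega
  have hvan : ∀ x ∉ Set.range (fun k : ℕ => 2*k+1), h x = 0 := by
    intro x hx
    have hno : ¬ Odd x := by
      intro hox
      obtain ⟨k, hk⟩ := hox
      exact hx ⟨k, by simp; omega⟩
    simp [hdef, hno]
  have hodd : HasSum h (Real.pi^2/12) := by
    rw [← Function.Injective.hasSum_iff hinj hvan]
    have h2 := hζ.mul_left (1/2)
    have heq : (fun n : ℕ => (1/2) * ((1:ℝ)/((n:ℝ)+1)^2)) = h ∘ (fun k : ℕ => 2*k+1) := by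
      funext n
      simp only [hdef, Function.comp, if_pos (show Odd (2*n+1) from ⟨n, by ring⟩)]
      push_cast
      field_simp
      ring
    rw [heq] at h2
    convert h2 using 1
    · rfl
    ring
  have hsub := hζ.sub hodd
  have heq : (fun n : ℕ => (1:ℝ)/((n:ℝ)+1)^2 - h n) = fun n : ℕ => (-1:ℝ)^n/((n:ℝ)+1)^2 := by
    funext n
    rcases Nat.even_or_odd n with he | ho
    · simp [hdef, (Nat.not_odd_iff_even.mpr he), he.neg_one_pow]
    · simp only [hdef, if_pos ho, ho.neg_one_pow]
      ring
  rw [heq] at hsub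
  convert hsub using 1
  · rfl
  ring

-- inner integral
lemma inner_int {x : ℝ} (hx : 1 < x) :
    (∫ y in Set.Ioo (0:ℝ) 1, 1 / (x * (x + y))) = Real.log (1 + x⁻¹) / x := by
  have hx0 : (0:ℝ) < x := by linarith
  have h1 : (∫ y in Set.Ioo (0:ℝ) 1, 1 / (x * (x + y)))
      = ∫ y in (0:ℝ)..1, x⁻¹ * (x + y)⁻¹ := by
    rw [intervalIntegral.integral_of_le zero_le_one, ← integral_Ioc_eq_integral_Ioo]
    congr 1
    funext y
    rw [one_div, mul_inv]
  rw [h1, intervalIntegral.integral_const_mul]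
  have h2 : (∫ y in (0:ℝ)..1, (x + y)⁻¹) = ∫ u in x..(x+1), u⁻¹ := by
    simpa using intervalIntegral.integral_comp_add_left (a := (0:ℝ)) (b := 1) (fun u => u⁻¹) x
  rw [h2, integral_inv_of_pos hx0 (by linarith)]
  rw [show (x+1)/x = 1 + x⁻¹ by field_simp]
  ring

noncomputable def F (n : ℕ) (x : ℝ) : ℝ := (-1:ℝ)^n / (((n:ℝ)+1) * x^(n+2))



lemma F_eq (n : ℕ) {x : ℝ} (hx : 1 < x) :
    F n x = ((-1:ℝ)^n / ((n:ℝ)+1)) * x ^ (-((n:ℝ)+2)) := by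
  have hx0 : (0:ℝ) < x := by linarith
  rw [F, Real.rpow_neg hx0.le, show ((n:ℝ)+2) = ((n+2 : ℕ) : ℝ) by push_cast; ring,
    Real.rpow_natCast]
  field_simp

lemma exp_lt (n : ℕ) : -((n:ℝ)+2) < -1 := by
  have : (0:ℝ) ≤ n := n.cast_nonneg
  linarith

lemma F_integrable (n : ℕ) : IntegrableOn (F n) (Set.Ioi (1:ℝ)) := by
  have h : IntegrableOn (fun x : ℝ => ((-1:ℝ)^n / ((n:ℝ)+1)) * x ^ (-((n:ℝ)+2)))
      (Set.Ioi (1:ℝ)) :=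
    (integrableOn_Ioi_rpow_of_lt (exp_lt n) one_pos).const_mul _
  exact h.congr_fun (fun x hx => (F_eq n hx).symm) measurableSet_Ioi

lemma rpow_int_val (n : ℕ) : (∫ x in Set.Ioi (1:ℝ), x ^ (-((n:ℝ)+2))) = 1/((n:ℝ)+1) := by
  rw [integral_Ioi_rpow_of_lt (exp_lt n) one_pos]
  rw [show -((n:ℝ)+2)+1 = -((n:ℝ)+1) by ring, Real.one_rpow, div_neg, neg_div, neg_neg]

lemma F_int_val (n : ℕ) :
    (∫ x in Set.Ioi (1:ℝ), F n x) = (-1:ℝ)^n/((n:ℝ)+1)^2 := by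
  rw [setIntegral_congr_fun measurableSet_Ioi (fun x hx => F_eq n hx),
    integral_const_mul, rpow_int_val]
  have : ((n:ℝ)+1) ≠ 0 := by positivity
  field_simp

lemma F_norm_val (n : ℕ) :
    (∫ x in Set.Ioi (1:ℝ), ‖F n x‖) = 1/((n:ℝ)+1)^2 := by
  have heq : EqOn (fun x => ‖F n x‖)
      (fun x => (1/((n:ℝ)+1)) * x ^ (-((n:ℝ)+2))) (Set.Ioi (1:ℝ)) := by
    intro x hx
    have hx1 : (1:ℝ) < x := hx
    simp only
    rw [F_eq n hx1, norm_mul, Real.norm_eq_abs, Real.norm_eq_abs, abs_div, abs_pow, abs_neg,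
      abs_one, one_pow, abs_of_nonneg (Real.rpow_nonneg (by linarith) _),
      abs_of_pos (show (0:ℝ) < (n:ℝ)+1 by positivity)]
  rw [setIntegral_congr_fun measurableSet_Ioi heq, integral_const_mul, rpow_int_val]
  have : ((n:ℝ)+1) ≠ 0 := by positivity
  field_simp
lemma F_hasSum {x : ℝ} (hx : 1 < x) :
    HasSum (fun n => F n x) (Real.log (1 + x⁻¹) / x) := by
  have hx0 : (0:ℝ) < x := by linarith
  have ht : |(-x⁻¹)| < 1 := by
    rw [abs_neg, abs_of_pos (inv_pos.mpr hx0)]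
    exact inv_lt_one_of_one_lt₀ hx
  have h := (Real.hasSum_pow_div_log_of_abs_lt_one ht).mul_left (-x⁻¹)
  have heq : (fun n : ℕ => -x⁻¹ * ((-x⁻¹)^(n+1)/((n:ℝ)+1))) = fun n => F n x := by
    funext n
    rw [F]
    have : (-x⁻¹)^(n+1) = (-1:ℝ)^(n+1) * (x^(n+1))⁻¹ := by
      rw [neg_pow, inv_pow]
    rw [this]
    have hxn : (x:ℝ)^(n+1) ≠ 0 := pow_ne_zero _ hx0.ne'
    field_simp
    rw [pow_succ, pow_succ]
    ring
  rw [heq] at h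
  have : -x⁻¹ * -Real.log (1 - -x⁻¹) = Real.log (1 + x⁻¹) / x := by
    rw [sub_neg_eq_add]
    field_simp
  rwa [this] at h

lemma summable_inv_sq : Summable (fun n : ℕ => (1:ℝ)/((n:ℝ)+1)^2) := by
  have h := (Real.summable_one_div_nat_pow (p := 2)).mpr one_lt_two
  have := (summable_nat_add_iff 1).mpr h
  simpa using this

theorem double_integral_Z2 :
    (∫ x in Set.Ioi (1:ℝ), ∫ y in Set.Ioo (0:ℝ) 1, 1 / (x * (x + y)))
    = Real.pi ^ 2 / 12 := by
  rw [setIntegral_congr_fun measurableSet_Ioi (fun x hx => inner_int hx)]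
  have hnorm : Summable (fun n : ℕ => ∫ x in Set.Ioi (1:ℝ), ‖F n x‖) := by
    apply summable_inv_sq.congr
    intro n
    exact (F_norm_val n).symm
  have hint := hasSum_integral_of_summable_integral_norm
    (μ := volume.restrict (Set.Ioi (1:ℝ))) (F := F) F_integrable hnorm
  have h1 : (∫ x in Set.Ioi (1:ℝ), ∑' n, F n x)
      = ∫ x in Set.Ioi (1:ℝ), Real.log (1 + x⁻¹) / x := by
    apply setIntegral_congr_fun measurableSet_Ioi
    intro x hx
    exact (F_hasSum hx).tsum_eq
  rw [h1] at hint
  have h2 : (fun n : ℕ => ∫ x in Set.Ioi (1:ℝ), F n x)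
      = fun n : ℕ => (-1:ℝ)^n/((n:ℝ)+1)^2 := by
    funext n; exact F_int_val n
  rw [h2] at hint
  exact hint.unique eta_two
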